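/- arXiv:1308.5153 — 3 statements merged into one kernel-verified Lean document; each statement's English description precedes it below -/
import Mathlib

section
/- If f and g in the maximal ideal of K[[x_1,...,x_n]] are contact equivalent, then for every k ≥ 0 the k-th Tjurina algebras T_k(f) = K[[x]]/⟨f, m^k·j(f)⟩ and T_k(g) = K[[x]]/⟨g, m^k·j(g)⟩ are isomorphic as K-algebras. -/
noncomputable section

/-- The formal power series ring `K[[x_1,...,x_n]]`. -/
abbrev PS (K : Type*) [Field K] (n : ℕ) := MvPowerSeries (Fin n) K

/-- The maximal ideal `m` of `K[[x]]` (power series with zero constant term). -/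
def mx (K : Type*) [Field K] (n : ℕ) : Ideal (PS K n) :=
  RingHom.ker (MvPowerSeries.constantCoeff (σ := Fin n) (R := K))

/-- The `i`-th formal partial derivative of a power series. -/
def pd {K : Type*} [Field K] {n : ℕ} (i : Fin n) (f : PS K n) : PS K n :=
  fun e => (e i + 1 : ℕ) • MvPowerSeries.coeff (R := K) (e + Finsupp.single i 1) f

/-- The Jacobian ideal `j(f) = ⟨∂f/∂x_1, ..., ∂f/∂x_n⟩`. -/
def jId {K : Type*} [Field K] {n : ℕ} (f : PS K n) : Ideal (PS K n) :=
  Ideal.span (Set.range fun i => pd i f)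

/-- The Tjurina ideal `tj(f) = ⟨f⟩ + j(f)`. -/
def tjId {K : Type*} [Field K] {n : ℕ} (f : PS K n) : Ideal (PS K n) :=
  Ideal.span {f} ⊔ jId f

/-- The ideal defining the `k`-th Tjurina algebra: `⟨f, m^k j(f)⟩`. -/
def TkId {K : Type*} [Field K] {n : ℕ} (k : ℕ) (f : PS K n) : Ideal (PS K n) :=
  Ideal.span {f} ⊔ (mx K n) ^ k * jId f

/-- The ideal defining the `k`-th Milnor algebra: `m^k j(f)`. -/
def MkId {K : Type*} [Field K] {n : ℕ} (k : ℕ) (f : PS K n) : Ideal (PS K n) :=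
  (mx K n) ^ k * jId f

/-- Contact equivalence: `g = u · φ(f)`. -/
def ContactEquiv {K : Type*} [Field K] {n : ℕ} (f g : PS K n) : Prop :=
  ∃ (φ : PS K n ≃ₐ[K] PS K n) (u : (PS K n)ˣ), g = (u : PS K n) * φ f

/-- Right equivalence: `g = φ(f)`. -/
def RightEquiv {K : Type*} [Field K] {n : ℕ} (f g : PS K n) : Prop :=
  ∃ φ : PS K n ≃ₐ[K] PS K n, g = φ f

/-- `f` is contact `N`-determined. -/
def ContactDetermined {K : Type*} [Field K] {n : ℕ} (N : ℕ) (f : PS K n) : Prop :=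
  ∀ g : PS K n, g - f ∈ (mx K n) ^ (N + 1) → ContactEquiv f g

/-- `f` is right `N`-determined. -/
def RightDetermined {K : Type*} [Field K] {n : ℕ} (N : ℕ) (f : PS K n) : Prop :=
  ∀ g : PS K n, g - f ∈ (mx K n) ^ (N + 1) → RightEquiv f g

namespace Aux
open MvPowerSeries Finsupp
variable {K : Type*} [Field K] {n : ℕ}

lemma coeff_pd (i : Fin n) (f : PS K n) (e : Fin n →₀ ℕ) :
    MvPowerSeries.coeff e (pd i f) =
      (e i + 1 : ℕ) • MvPowerSeries.coeff (e + Finsupp.single i 1) f := rfl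

lemma pd_add (i : Fin n) (f g : PS K n) : pd i (f + g) = pd i f + pd i g := by
  ext e
  simp [coeff_pd, map_add, smul_add]

lemma pd_smul (i : Fin n) (c : K) (f : PS K n) : pd i (c • f) = c • pd i f := by
  ext e
  simp only [coeff_pd, map_smul, smul_comm c]

lemma pd_one (i : Fin n) : pd i (1 : PS K n) = 0 := by
  ext e
  rw [coeff_pd]
  rw [show ((1 : PS K n) = MvPowerSeries.monomial 0 1) from (monomial_zero_one (R := K)).symm]
  rw [coeff_monomial, if_neg fun h => by
    have := DFunLike.congr_fun h i
    simp at this]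
  simp

end Aux

namespace Aux
open MvPowerSeries Finsupp
variable {K : Type*} [Field K] {n : ℕ}

lemma helper (i : Fin n) (f g : PS K n) (e : Fin n →₀ ℕ) :
    ∑ p ∈ Finset.HasAntidiagonal.antidiagonal (e + Finsupp.single i 1),
        ((p.2 : Fin n →₀ ℕ) i) • (MvPowerSeries.coeff p.1 f * MvPowerSeries.coeff p.2 g) =
      MvPowerSeries.coeff e (f * pd i g) := by
  classical
  rw [MvPowerSeries.coeff_mul]
  refine Finset.sum_bij_ne_zero (fun p _ _ => (p.1, p.2 - Finsupp.single i 1)) ?_ ?_ ?_ ?_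
  · intro p hp hne
    rw [Finset.HasAntidiagonal.mem_antidiagonal] at hp ⊢
    have h2 : p.2 i ≠ 0 := fun h => hne (by simp [h])
    have hle : Finsupp.single i 1 ≤ p.2 := by
      rwa [Finsupp.single_le_iff, Nat.one_le_iff_ne_zero]
    have h3 : (p.1 + (p.2 - Finsupp.single i 1)) + Finsupp.single i 1
        = e + Finsupp.single i 1 := by
      rw [add_assoc, tsub_add_cancel_of_le hle, hp]
    exact add_right_cancel h3
  · intro p hp hpne p' hp' hpne' hee
    have h2 : p.2 i ≠ 0 := fun h => hpne (by simp [h])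
    have h2' : p'.2 i ≠ 0 := fun h => hpne' (by simp [h])
    have hle : Finsupp.single i 1 ≤ p.2 := by
      rwa [Finsupp.single_le_iff, Nat.one_le_iff_ne_zero]
    have hle' : Finsupp.single i 1 ≤ p'.2 := by
      rwa [Finsupp.single_le_iff, Nat.one_le_iff_ne_zero]
    simp only [Prod.mk.injEq] at hee
    have h1 : p.1 = p'.1 := hee.1
    have h2 : p.2 - Finsupp.single i 1 = p'.2 - Finsupp.single i 1 := hee.2
    have h3 : p.2 = p'.2 := by
      rw [← tsub_add_cancel_of_le hle, ← tsub_add_cancel_of_le hle', h2]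
    exact Prod.ext h1 h3
  · intro q hq hqne
    refine ⟨(q.1, q.2 + Finsupp.single i 1), ?_, ?_, ?_⟩
    · rw [Finset.HasAntidiagonal.mem_antidiagonal] at hq ⊢
      rw [← add_assoc, hq]
    · have : (((q.1, q.2 + Finsupp.single i 1).2 : Fin n →₀ ℕ) i)
          • (MvPowerSeries.coeff q.1 f * MvPowerSeries.coeff (q.2 + Finsupp.single i 1) g)
          = MvPowerSeries.coeff q.1 f * MvPowerSeries.coeff q.2 (pd i g) := by
        rw [coeff_pd, mul_smul_comm]
        simp
      exact fun h0 => hqne (this.symm.trans h0)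
    · simp
  · intro p hp hne
    have h2 : p.2 i ≠ 0 := fun h => hne (by simp [h])
    have hle : Finsupp.single i 1 ≤ p.2 := by
      rwa [Finsupp.single_le_iff, Nat.one_le_iff_ne_zero]
    rw [coeff_pd, mul_smul_comm]
    rw [tsub_add_cancel_of_le hle]
    congr 1
    rw [Finsupp.tsub_apply, Finsupp.single_eq_same, Nat.sub_add_cancel
      (Nat.one_le_iff_ne_zero.mpr h2)]

lemma pd_mul (i : Fin n) (f g : PS K n) :
    pd i (f * g) = f * pd i g + pd i f * g := by
  classical
  ext e
  rw [map_add, coeff_pd, MvPowerSeries.coeff_mul, Finset.smul_sum]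
  have key : ∀ p ∈ Finset.HasAntidiagonal.antidiagonal (e + Finsupp.single i 1),
      (e i + 1) • (MvPowerSeries.coeff p.1 f * MvPowerSeries.coeff p.2 g)
      = ((p.2 : Fin n →₀ ℕ) i) • (MvPowerSeries.coeff p.1 f * MvPowerSeries.coeff p.2 g)
        + ((p.1 : Fin n →₀ ℕ) i) • (MvPowerSeries.coeff p.1 f * MvPowerSeries.coeff p.2 g) := by
    intro p hp
    rw [Finset.HasAntidiagonal.mem_antidiagonal] at hp
    have h1 : p.2 i + p.1 i = e i + 1 := by
      rw [← Finsupp.add_apply, add_comm p.2 p.1, hp]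
      simp
    rw [← h1, add_smul]
  rw [Finset.sum_congr rfl key, Finset.sum_add_distrib]
  congr 1
  · exact helper i f g e
  · rw [show pd i f * g = g * pd i f from mul_comm _ _, ← helper i g f e]
    refine Finset.sum_nbij' Prod.swap Prod.swap ?_ ?_ ?_ ?_ ?_ <;>
      simp [Finset.HasAntidiagonal.mem_antidiagonal, add_comm, mul_comm]

end Aux

namespace Aux
open MvPowerSeries Finsupp
variable {K : Type*} [Field K] {n : ℕ}

lemma deg_add (a b : Fin n →₀ ℕ) :
    Finsupp.degree (a + b) = Finsupp.degree a + Finsupp.degree b := by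
  simp [Finsupp.degree_eq_weight_one, map_add]

lemma mem_mx_iff {f : PS K n} : f ∈ mx K n ↔ MvPowerSeries.coeff 0 f = 0 := by
  rw [mx, RingHom.mem_ker, coeff_zero_eq_constantCoeff_apply]

lemma coeff_eq_zero_of_mem_pow {N : ℕ} {f : PS K n} (hf : f ∈ (mx K n) ^ N) :
    ∀ d : Fin n →₀ ℕ, Finsupp.degree d < N → MvPowerSeries.coeff d f = 0 := by
  classical
  induction N generalizing f with
  | zero => exact fun d hd => absurd hd (Nat.not_lt_zero _)
  | succ N ih =>
    rw [pow_succ] at hf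
    refine Submodule.mul_induction_on hf ?_ ?_
    · intro a ha b hb d hd
      rw [MvPowerSeries.coeff_mul]
      refine Finset.sum_eq_zero fun p hp => ?_
      rw [Finset.HasAntidiagonal.mem_antidiagonal] at hp
      by_cases h2 : p.2 = 0
      · rw [h2, mem_mx_iff.mp hb, mul_zero]
      · have hdeg2 : 1 ≤ Finsupp.degree p.2 := by
          rcases Nat.eq_zero_or_pos (Finsupp.degree p.2) with h | h
          · exact absurd ((Finsupp.degree_eq_zero_iff _).mp h) h2
          · exact h
        have : Finsupp.degree p.1 < N := by
          have := deg_add p.1 p.2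
          rw [hp] at this
          omega
        rw [ih ha p.1 this, zero_mul]
    · intro x y hx hy d hd
      rw [map_add, hx d hd, hy d hd, add_zero]

lemma mem_pow_of_coeff_eq_zero {N : ℕ} {f : PS K n}
    (h : ∀ d : Fin n →₀ ℕ, Finsupp.degree d < N → MvPowerSeries.coeff d f = 0) :
    f ∈ (mx K n) ^ N := by
  classical
  induction N generalizing f with
  | zero => rw [pow_zero, Ideal.one_eq_top]; exact Submodule.mem_top
  | succ N ih =>
    set P : Fin n → (Fin n →₀ ℕ) → Prop := fun i d => d i ≠ 0 ∧ ∀ j, j < i → d j = 0 with hP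
    set g : Fin n → PS K n := fun i =>
      fun e => if P i (e + Finsupp.single i 1)
        then MvPowerSeries.coeff (e + Finsupp.single i 1) f else 0 with hg
    have hcg : ∀ i d, MvPowerSeries.coeff d (MvPowerSeries.X i * g i)
        = if P i d then MvPowerSeries.coeff d f else 0 := by
      intro i d
      rw [MvPowerSeries.X, coeff_monomial_mul]
      by_cases hle : Finsupp.single i 1 ≤ d
      · rw [if_pos hle, one_mul]
        have hdd : d - Finsupp.single i 1 + Finsupp.single i 1 = d :=
          tsub_add_cancel_of_le hle
        show (if P i (d - Finsupp.single i 1 + Finsupp.single i 1)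
          then MvPowerSeries.coeff (d - Finsupp.single i 1 + Finsupp.single i 1) f else 0) = _
        rw [hdd]
      · rw [if_neg hle, if_neg]
        intro hPd
        exact hle (Finsupp.single_le_iff.mpr (Nat.one_le_iff_ne_zero.mpr hPd.1))
    have hfeq : f = ∑ i : Fin n, MvPowerSeries.X i * g i := by
      ext d
      rw [map_sum]
      by_cases hd : d = 0
      · rw [hd]
        rw [h 0 (by simp)]
        refine (Finset.sum_eq_zero fun i _ => ?_).symm
        rw [hcg, if_neg]
        intro hPd
        exact hPd.1 (by simp)
      · have hsupp : d.support.Nonempty := Finsupp.support_nonempty_iff.mpr hd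
        set i0 := d.support.min' hsupp with hi0
        have hPi0 : P i0 d := by
          constructor
          · exact Finsupp.mem_support_iff.mp (d.support.min'_mem hsupp)
          · intro j hj
            by_contra hdj
            exact absurd (d.support.min'_le j (Finsupp.mem_support_iff.mpr hdj)) (not_le.mpr hj)
        rw [Finset.sum_congr rfl (fun i _ => hcg i d)]
        rw [Finset.sum_eq_single_of_mem i0 (Finset.mem_univ i0)]
        · rw [if_pos hPi0]
        · intro b _ hb
          rw [if_neg]
          intro hPb
          rcases lt_or_gt_of_ne hb with hlt | hgt
          · exact hPb.1 (hPi0.2 b hlt)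
          · exact hPi0.1 (hPb.2 i0 hgt)
    have hgmem : ∀ i : Fin n, g i ∈ (mx K n) ^ N := by
      intro i
      refine ih fun d hd => ?_
      show (if P i (d + Finsupp.single i 1)
        then MvPowerSeries.coeff (d + Finsupp.single i 1) f else 0) = 0
      split_ifs with hPd
      · refine h _ ?_
        rw [deg_add]
        have : Finsupp.degree (Finsupp.single i (1 : ℕ)) = 1 := by
          exact Finsupp.degree_single i 1
        omega
      · rfl
    rw [hfeq, pow_succ]
    refine Submodule.sum_mem _ fun i _ => ?_
    rw [mul_comm (MvPowerSeries.X i) (g i)]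
    exact Ideal.mul_mem_mul (hgmem i) (by
      rw [mem_mx_iff, MvPowerSeries.coeff_zero_eq_constantCoeff_apply,
        MvPowerSeries.constantCoeff_X])

lemma mem_mx_pow_iff {N : ℕ} {f : PS K n} :
    f ∈ (mx K n) ^ N ↔
      ∀ d : Fin n →₀ ℕ, Finsupp.degree d < N → MvPowerSeries.coeff d f = 0 :=
  ⟨coeff_eq_zero_of_mem_pow, mem_pow_of_coeff_eq_zero⟩

end Aux

namespace Aux
open MvPowerSeries Finsupp
variable {K : Type*} [Field K] {n : ℕ}

def pdDer (i : Fin n) : Derivation K (PS K n) (PS K n) where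
  toFun := pd i
  map_add' := pd_add i
  map_smul' := pd_smul i
  map_one_eq_zero' := pd_one i
  leibniz' a b := by
    show pd i (a * b) = a • pd i b + b • pd i a
    rw [smul_eq_mul, smul_eq_mul, pd_mul]
    ring

@[simp] lemma pdDer_apply (i : Fin n) (f : PS K n) : (pdDer (K := K) i) f = pd i f := rfl

lemma pd_X (i j : Fin n) :
    pd i (MvPowerSeries.X j : PS K n) = if j = i then 1 else 0 := by
  classical
  ext e
  rw [coeff_pd, MvPowerSeries.coeff_X]
  by_cases hji : j = i
  · subst hji
    by_cases he : e = 0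
    · subst he
      rw [if_pos (by simp), if_pos rfl, MvPowerSeries.coeff_one, if_pos rfl]
      simp
    · rw [if_neg, if_pos rfl, MvPowerSeries.coeff_one, if_neg he, smul_zero]
      intro hc
      exact he (add_right_cancel (hc.trans (zero_add (Finsupp.single j 1)).symm))
  · rw [if_neg, if_neg hji, MvPowerSeries.coeff_zero, smul_zero]
    intro hc
    have := DFunLike.congr_fun hc i
    simp [Finsupp.single_apply, hji, Ne.symm hji] at this

lemma der_sum_apply {ι : Type*} (s : Finset ι) (D : ι → Derivation K (PS K n) (PS K n))
    (a : PS K n) : (∑ i ∈ s, D i) a = ∑ i ∈ s, D i a := by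
  classical
  induction s using Finset.cons_induction with
  | empty => simp
  | cons i s hi ih => rw [Finset.sum_cons, Finset.sum_cons, Derivation.add_apply, ih]

lemma der_mem_pow (D : Derivation K (PS K n) (PS K n)) {N : ℕ} :
    ∀ x ∈ (mx K n) ^ (N + 1), D x ∈ (mx K n) ^ N := by
  induction N with
  | zero =>
    intro x _
    rw [pow_zero, Ideal.one_eq_top]
    exact Submodule.mem_top
  | succ N ih =>
    intro x hx
    rw [pow_succ] at hx
    refine Submodule.mul_induction_on hx ?_ ?_
    · intro a ha b hb
      rw [Derivation.leibniz, smul_eq_mul, smul_eq_mul]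
      refine Ideal.add_mem _ ?_ ?_
      · exact Ideal.mul_mem_right _ _ ha
      · rw [pow_succ, mul_comm b (D a)]
        exact Ideal.mul_mem_mul (ih a ha) hb
    · intro x y hx hy
      rw [map_add]
      exact Ideal.add_mem _ hx hy

lemma monomial_one_mem (e : Fin n →₀ ℕ) :
    (MvPowerSeries.monomial e 1 : PS K n)
      ∈ Algebra.adjoin K (Set.range (MvPowerSeries.X : Fin n → PS K n)) := by
  induction e using Finsupp.induction with
  | zero =>
    rw [MvPowerSeries.monomial_zero_one]
    exact Subalgebra.one_mem _
  | single_add i k e hie hk ihe =>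
    have h2 : (MvPowerSeries.monomial (Finsupp.single i k + e) (1 : K) : PS K n)
        = MvPowerSeries.monomial (Finsupp.single i k) 1 * MvPowerSeries.monomial e 1 := by
      rw [MvPowerSeries.monomial_mul_monomial, one_mul]
    rw [h2, ← MvPowerSeries.X_pow_eq]
    exact Subalgebra.mul_mem _
      (Subalgebra.pow_mem _ (Algebra.subset_adjoin (Set.mem_range_self i)) k) ihe

lemma der_apply_mem_jId (D : Derivation K (PS K n) (PS K n)) (f : PS K n) :
    D f ∈ jId f := by
  classical
  set E : Derivation K (PS K n) (PS K n) :=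
    D - ∑ i : Fin n, D (MvPowerSeries.X i) • pdDer i with hE
  have hEapp : ∀ a, E a = D a - ∑ i : Fin n, D (MvPowerSeries.X i) * pd i a := by
    intro a
    rw [hE, Derivation.sub_apply, der_sum_apply]
    simp only [Derivation.smul_apply, pdDer_apply, smul_eq_mul]
  have hEX : ∀ j, E (MvPowerSeries.X j) = 0 := by
    intro j
    rw [hEapp]
    rw [Finset.sum_eq_single_of_mem j (Finset.mem_univ j)]
    · rw [pd_X, if_pos rfl, mul_one, sub_self]
    · intro b _ hb
      rw [pd_X, if_neg (Ne.symm hb), mul_zero]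
  have hadj : ∀ p ∈ Algebra.adjoin K (Set.range (MvPowerSeries.X : Fin n → PS K n)),
      E p = 0 := by
    intro p hp
    have := Derivation.eqOn_adjoin (R := K) (D1 := E) (D2 := 0)
      (s := Set.range (MvPowerSeries.X : Fin n → PS K n)) ?_ hp
    · simpa using this
    · rintro _ ⟨j, rfl⟩
      simp [hEX j]
  have hEf : E f = 0 := by
    ext d
    rw [MvPowerSeries.coeff_zero]
    set q : PS K n := ∑ e ∈ (Finsupp.finite_of_degree_le (σ := Fin n)
        (Finsupp.degree d + 2)).toFinset.filter
        (fun e => Finsupp.degree e < Finsupp.degree d + 2),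
      MvPowerSeries.monomial e (MvPowerSeries.coeff e f) with hq
    have hqmem : q ∈ Algebra.adjoin K (Set.range (MvPowerSeries.X : Fin n → PS K n)) := by
      refine Subalgebra.sum_mem _ fun e _ => ?_
      have h1 : (MvPowerSeries.monomial e (MvPowerSeries.coeff e f) : PS K n)
          = MvPowerSeries.coeff e f • MvPowerSeries.monomial e 1 := by
        rw [← map_smul, smul_eq_mul, mul_one]
      rw [h1]
      exact Subalgebra.smul_mem _ (monomial_one_mem e) _
    have hfq : f - q ∈ (mx K n) ^ (Finsupp.degree d + 2) := by
      refine mem_pow_of_coeff_eq_zero fun e he => ?_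
      have hmemS : e ∈ (Finsupp.finite_of_degree_le (σ := Fin n)
          (Finsupp.degree d + 2)).toFinset.filter
          (fun e => Finsupp.degree e < Finsupp.degree d + 2) := by
        rw [Finset.mem_filter, Set.Finite.mem_toFinset]
        exact ⟨by simp only [Set.mem_setOf_eq]; omega, he⟩
      have hcq : MvPowerSeries.coeff e q = MvPowerSeries.coeff e f := by
        rw [hq, map_sum, Finset.sum_eq_single_of_mem e hmemS
          (fun b _ hb => by rw [MvPowerSeries.coeff_monomial, if_neg (Ne.symm hb)]),
          MvPowerSeries.coeff_monomial_same]
      rw [map_sub, hcq, sub_self]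
    have hEfq : E f = E (f - q) := by
      rw [map_sub, hadj q hqmem, sub_zero]
    have hmem2 : E (f - q) ∈ (mx K n) ^ (Finsupp.degree d + 1) :=
      der_mem_pow E (f - q) hfq
    rw [hEfq]
    exact coeff_eq_zero_of_mem_pow hmem2 d (Nat.lt_succ_self _)
  have hDf : D f = ∑ i : Fin n, D (MvPowerSeries.X i) * pd i f := by
    have h0 := hEapp f
    rw [hEf] at h0
    exact (sub_eq_zero.mp h0.symm)
  rw [hDf]
  exact Submodule.sum_mem _ fun i _ =>
    Ideal.mul_mem_left _ _ (Ideal.subset_span ⟨i, rfl⟩)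

end Aux

namespace Aux
open MvPowerSeries
variable {K : Type*} [Field K] {n : ℕ}

def derConj (φ : PS K n ≃ₐ[K] PS K n) (D : Derivation K (PS K n) (PS K n)) :
    Derivation K (PS K n) (PS K n) where
  toFun x := φ (D (φ.symm x))
  map_add' x y := by simp
  map_smul' c x := by simp
  map_one_eq_zero' := by
    show φ (D (φ.symm 1)) = 0
    rw [map_one, Derivation.map_one_eq_zero, map_zero]
  leibniz' a b := by
    show φ (D (φ.symm (a * b))) = a • φ (D (φ.symm b)) + b • φ (D (φ.symm a))
    rw [map_mul, Derivation.leibniz, smul_eq_mul, smul_eq_mul, map_add, map_mul, map_mul,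
      AlgEquiv.apply_symm_apply, AlgEquiv.apply_symm_apply, smul_eq_mul, smul_eq_mul]

@[simp] lemma derConj_apply (φ : PS K n ≃ₐ[K] PS K n) (D : Derivation K (PS K n) (PS K n))
    (x : PS K n) : derConj φ D x = φ (D (φ.symm x)) := rfl

lemma mem_mx_iff_not_isUnit {f : PS K n} : f ∈ mx K n ↔ ¬ IsUnit f := by
  rw [mem_mx_iff, MvPowerSeries.coeff_zero_eq_constantCoeff_apply,
    MvPowerSeries.isUnit_iff_constantCoeff, isUnit_iff_ne_zero]
  tauto

lemma map_mx (φ : PS K n ≃ₐ[K] PS K n) :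
    Ideal.map (φ : PS K n →+* PS K n) (mx K n) = mx K n := by
  refine le_antisymm (Ideal.map_le_iff_le_comap.mpr fun x hx => ?_) (fun x hx => ?_)
  · rw [Ideal.mem_comap]
    rw [mem_mx_iff_not_isUnit] at hx ⊢
    intro hu
    exact hx (by simpa using hu.map φ.symm.toRingHom)
  · have h1 : φ.symm x ∈ mx K n := by
      rw [mem_mx_iff_not_isUnit] at hx ⊢
      intro hu
      exact hx (by simpa using hu.map φ.toRingHom)
    have := Ideal.mem_map_of_mem (φ : PS K n →+* PS K n) h1
    simpa using this

lemma map_jId (φ : PS K n ≃ₐ[K] PS K n) (f : PS K n) :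
    Ideal.map (φ : PS K n →+* PS K n) (jId f) = jId (φ f) := by
  refine le_antisymm (Ideal.map_le_iff_le_comap.mpr ?_) ?_
  · rw [jId, Ideal.span_le]
    rintro _ ⟨i, rfl⟩
    rw [SetLike.mem_coe, Ideal.mem_comap]
    have h1 : (φ : PS K n →+* PS K n) (pd i f) = derConj φ (pdDer i) (φ f) := by
      rw [derConj_apply, AlgEquiv.symm_apply_apply]
      rfl
    rw [h1]
    exact der_apply_mem_jId _ _
  · rw [jId, jId, Ideal.span_le]
    rintro _ ⟨i, rfl⟩
    rw [SetLike.mem_coe]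
    show pd i (φ f) ∈ _
    have h1 : pd i (φ f) = (φ : PS K n →+* PS K n) (derConj φ.symm (pdDer i) f) := by
      rw [derConj_apply]
      show pd i (φ f) = φ (φ.symm (pd i (φ.symm.symm f)))
      rw [AlgEquiv.symm_symm, AlgEquiv.apply_symm_apply]
    rw [h1]
    exact Ideal.mem_map_of_mem _ (der_apply_mem_jId _ _)

lemma jId_unit_mul_le (u : (PS K n)ˣ) (h : PS K n) :
    jId ((u : PS K n) * h) ≤ Ideal.span {h} ⊔ jId h := by
  rw [jId, Ideal.span_le]
  rintro _ ⟨i, rfl⟩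
  rw [SetLike.mem_coe]
  show pd i ((u : PS K n) * h) ∈ _
  rw [pd_mul]
  refine Ideal.add_mem _ ?_ ?_
  · exact Ideal.mem_sup_right (Ideal.mul_mem_left _ _ (Ideal.subset_span ⟨i, rfl⟩))
  · exact Ideal.mem_sup_left (Ideal.mul_mem_left _ _ (Ideal.mem_span_singleton_self h))

lemma TkId_unit_mul_le (k : ℕ) (u : (PS K n)ˣ) (h : PS K n) :
    TkId k ((u : PS K n) * h) ≤ TkId k h := by
  rw [TkId, TkId]
  refine sup_le ?_ ?_
  · rw [Ideal.span_le]
    rintro _ rfl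
    exact Ideal.mem_sup_left (Ideal.mul_mem_left _ _ (Ideal.mem_span_singleton_self h))
  · calc (mx K n) ^ k * jId ((u : PS K n) * h)
        ≤ (mx K n) ^ k * (Ideal.span {h} ⊔ jId h) :=
          Ideal.mul_mono_right (jId_unit_mul_le u h)
      _ = (mx K n) ^ k * Ideal.span {h} ⊔ (mx K n) ^ k * jId h := Ideal.mul_sup _ _ _
      _ ≤ Ideal.span {h} ⊔ (mx K n) ^ k * jId h :=
          sup_le_sup Ideal.mul_le_right le_rfl

lemma TkId_unit_mul (k : ℕ) (u : (PS K n)ˣ) (h : PS K n) :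
    TkId k ((u : PS K n) * h) = TkId k h := by
  refine le_antisymm (TkId_unit_mul_le k u h) ?_
  have h2 := TkId_unit_mul_le k u⁻¹ ((u : PS K n) * h)
  rwa [← mul_assoc, Units.inv_mul, one_mul] at h2

lemma map_TkId (k : ℕ) (φ : PS K n ≃ₐ[K] PS K n) (f : PS K n) :
    Ideal.map (φ : PS K n →+* PS K n) (TkId k f) = TkId k (φ f) := by
  rw [TkId, TkId, Ideal.map_sup, Ideal.map_span, Set.image_singleton,
    Ideal.map_mul, Ideal.map_pow, map_mx, map_jId]
  rfl

end Aux

/-- contact equivalent power series have isomorphic `k`-th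
Tjurina algebras for every `k`. -/
theorem stmt_1 {K : Type*} [Field K] {n : ℕ} (f g : PS K n)
    (hf : f ∈ mx K n) (hg : g ∈ mx K n)
    (h : ContactEquiv f g) :
    ∀ k : ℕ, Nonempty ((PS K n ⧸ TkId k f) ≃ₐ[K] (PS K n ⧸ TkId k g)) := by
  obtain ⟨φ, u, hgu⟩ := h
  intro k
  refine ⟨Ideal.quotientEquivAlg (TkId k f) (TkId k g) φ ?_⟩
  rw [Aux.map_TkId, hgu, Aux.TkId_unit_mul]
end
end

section
/- If f and g in the maximal ideal of K[[x_1,...,x_n]] are right equivalent (g = φ(f) for some K-algebra automorphism φ of K[[x]]), then for every k ≥ 0 the k-th Milnor algebras M_k(f) = K[[x]]/m^k·j(f) and M_k(g) = K[[x]]/m^k·j(g) are isomorphic as K[[t]]-algebras, where t acts on M_k(f) by multiplication with the class of f and on M_k(g) by multiplication with the class of g. -/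
noncomputable section

section Aux

open MvPowerSeries Finset
variable {K : Type*} [Field K] {n : ℕ}
lemma coeff_pd (i : Fin n) (f : PS K n) (e : Fin n →₀ ℕ) :
    MvPowerSeries.coeff (R := K) e (pd i f) = (e i + 1 : ℕ) • MvPowerSeries.coeff (R := K) (e + Finsupp.single i 1) f := rfl

lemma single_le_iff (i : Fin n) (d : Fin n →₀ ℕ) :
    Finsupp.single i 1 ≤ d ↔ 1 ≤ d i := by
  constructor
  · intro h; simpa using h i
  · intro h j
    rcases eq_or_ne j i with rfl | hj
    · simpa using h
    · simp [Finsupp.single_apply, Ne.symm hj]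

lemma aux_sum (i : Fin n) (f g : PS K n) (e : Fin n →₀ ℕ) :
    ((antidiagonal (e + Finsupp.single i 1) : Finset ((Fin n →₀ ℕ) × (Fin n →₀ ℕ)))).sum
      (fun p => (p.1 i) • (MvPowerSeries.coeff (R := K) p.1 f * MvPowerSeries.coeff (R := K) p.2 g))
    = MvPowerSeries.coeff (R := K) e (pd i f * g) := by
  classical
  rw [MvPowerSeries.coeff_mul]
  set s : Fin n →₀ ℕ := Finsupp.single i 1 with hs
  rw [← Finset.sum_filter_of_ne (p := fun p : (Fin n →₀ ℕ) × (Fin n →₀ ℕ) => s ≤ p.1)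
      (by
        intro p hp hne
        by_contra hle
        have h1 : p.1 i = 0 := by
          by_contra h0
          exact hle ((single_le_iff i p.1).2 (Nat.one_le_iff_ne_zero.2 h0))
        simp [h1] at hne)]
  refine Finset.sum_nbij' (fun p => (p.1 - s, p.2)) (fun q => (q.1 + s, q.2)) ?_ ?_ ?_ ?_ ?_
  · intro p hp
    simp only [Finset.mem_filter, Finset.HasAntidiagonal.mem_antidiagonal] at hp
    obtain ⟨hadd, hle⟩ := hp
    simp only [Finset.HasAntidiagonal.mem_antidiagonal]
    have h : p.1 - s + p.2 + s = e + s := by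
      rw [add_right_comm, tsub_add_cancel_of_le hle, hadd]
    exact add_right_cancel h
  · intro q hq
    simp only [Finset.HasAntidiagonal.mem_antidiagonal] at hq
    simp only [Finset.mem_filter, Finset.HasAntidiagonal.mem_antidiagonal]
    exact ⟨by rw [add_right_comm, hq], le_add_self⟩
  · intro p hp
    simp only [Finset.mem_filter, Finset.HasAntidiagonal.mem_antidiagonal] at hp
    simp [tsub_add_cancel_of_le hp.2]
  · intro q hq
    simp
  · intro p hp
    simp only [Finset.mem_filter, Finset.HasAntidiagonal.mem_antidiagonal] at hp
    show _ = MvPowerSeries.coeff (R := K) (p.1 - s) (pd i f) * _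
    rw [coeff_pd]
    have h1 : p.1 - s + s = p.1 := tsub_add_cancel_of_le hp.2
    have hle1 : 1 ≤ p.1 i := (single_le_iff i p.1).1 hp.2
    have h2 : (p.1 - s) i + 1 = p.1 i := by
      rw [Finsupp.tsub_apply, hs, Finsupp.single_apply]
      simp; omega
    rw [← hs, h1, h2, smul_mul_assoc]

lemma pd_mul (i : Fin n) (f g : PS K n) : pd i (f * g) = f * pd i g + g * pd i f := by
  classical
  have key : pd i (f * g) = pd i f * g + pd i g * f := by
    ext e
    rw [coeff_pd, MvPowerSeries.coeff_mul, map_add, Finset.smul_sum]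
    have step1 : ∀ p ∈ (antidiagonal (e + Finsupp.single i 1) :
        Finset ((Fin n →₀ ℕ) × (Fin n →₀ ℕ))),
        (e i + 1 : ℕ) • (MvPowerSeries.coeff (R := K) p.1 (f) * MvPowerSeries.coeff (R := K) p.2 (g))
        = (p.1 i) • (MvPowerSeries.coeff (R := K) p.1 f * MvPowerSeries.coeff (R := K) p.2 g)
          + (p.2 i) • (MvPowerSeries.coeff (R := K) p.1 f * MvPowerSeries.coeff (R := K) p.2 g) := by
      intro p hp
      rw [Finset.HasAntidiagonal.mem_antidiagonal] at hp
      have : p.1 i + p.2 i = e i + 1 := by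
        have := congrArg (fun d : Fin n →₀ ℕ => d i) hp
        simpa [Finsupp.add_apply, Finsupp.single_apply] using this
      rw [← this, add_smul]
    rw [Finset.sum_congr rfl step1, Finset.sum_add_distrib]
    congr 1
    · exact aux_sum i f g e
    · have swap : ((antidiagonal (e + Finsupp.single i 1) :
          Finset ((Fin n →₀ ℕ) × (Fin n →₀ ℕ)))).sum
          (fun p => (p.2 i) • (MvPowerSeries.coeff (R := K) p.1 f * MvPowerSeries.coeff (R := K) p.2 g))
          = ((antidiagonal (e + Finsupp.single i 1) :
          Finset ((Fin n →₀ ℕ) × (Fin n →₀ ℕ)))).sum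
          (fun p => (p.1 i) • (MvPowerSeries.coeff (R := K) p.1 g * MvPowerSeries.coeff (R := K) p.2 f)) := by
        refine Finset.sum_nbij' Prod.swap Prod.swap ?_ ?_ ?_ ?_ ?_ <;>
          simp [Finset.HasAntidiagonal.mem_antidiagonal, add_comm, mul_comm]
      rw [swap, aux_sum i g f e]
  rw [key]; ring

lemma pd_add (i : Fin n) (f g : PS K n) : pd i (f + g) = pd i f + pd i g := by
  ext e
  simp [coeff_pd, map_add, smul_add]

lemma pd_smul (i : Fin n) (c : K) (f : PS K n) : pd i (c • f) = c • pd i f := by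
  ext e
  simp [coeff_pd, MvPowerSeries.coeff_smul, smul_comm]; ring


def dg {n : ℕ} (e : Fin n →₀ ℕ) : ℕ := ∑ j, e j

lemma dg_add {n : ℕ} (a b : Fin n →₀ ℕ) : dg (a + b) = dg a + dg b := by
  simp [dg, Finset.sum_add_distrib]

lemma dg_single {n : ℕ} (i : Fin n) : dg (Finsupp.single i 1) = 1 := by
  simp [dg, Finsupp.single_apply]

lemma dg_eq_zero {n : ℕ} {e : Fin n →₀ ℕ} (h : dg e = 0) : e = 0 := by
  ext j
  have := Finset.sum_eq_zero_iff.1 h j (Finset.mem_univ j)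
  simpa using this

lemma mem_mx_iff {f : PS K n} : f ∈ mx K n ↔ MvPowerSeries.constantCoeff (σ := Fin n) (R := K) f = 0 :=
  RingHom.mem_ker

lemma coeff_eq_zero_of_mem_pow : ∀ N : ℕ, ∀ f : PS K n, f ∈ (mx K n) ^ N →
    ∀ e : Fin n →₀ ℕ, dg e < N → MvPowerSeries.coeff (R := K) e f = 0 := by
  intro N
  induction N with
  | zero => intro f _ e he; omega
  | succ N IH =>
    intro f hf
    rw [pow_succ] at hf
    refine Submodule.mul_induction_on hf ?_ ?_
    · intro a ha b hb e he
      rw [MvPowerSeries.coeff_mul]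
      refine Finset.sum_eq_zero ?_
      intro p hp
      rw [Finset.HasAntidiagonal.mem_antidiagonal] at hp
      rcases lt_or_ge (dg p.1) N with h1 | h1
      · rw [IH a ha p.1 h1, zero_mul]
      · have hdg : dg p.1 + dg p.2 = dg e := by rw [← dg_add, hp]
        have : dg p.2 = 0 := by omega
        have hp2 : p.2 = 0 := dg_eq_zero this
        rw [hp2, MvPowerSeries.coeff_zero_eq_constantCoeff, mem_mx_iff.1 hb, mul_zero]
    · intro x y hx hy e he
      rw [map_add, hx e he, hy e he, add_zero]

lemma eq_zero_of_forall_mem_pow {f : PS K n} (h : ∀ N, f ∈ (mx K n) ^ N) : f = 0 := by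
  ext e
  rw [map_zero]
  exact coeff_eq_zero_of_mem_pow (dg e + 1) f (h _) e (by omega)

lemma pd_mem_pow (i : Fin n) : ∀ N : ℕ, ∀ f : PS K n, f ∈ (mx K n) ^ (N + 1) →
    pd i f ∈ (mx K n) ^ N := by
  intro N
  induction N with
  | zero => intro f _; simp
  | succ N IH =>
    intro f hf
    rw [pow_succ] at hf
    refine Submodule.mul_induction_on hf ?_ ?_
    · intro a ha b hb
      rw [pd_mul]
      refine Ideal.add_mem _ ?_ ?_
      · exact Ideal.mul_mem_right _ _ ha
      · have : b * pd i a ∈ mx K n * (mx K n) ^ N := Ideal.mul_mem_mul hb (IH a ha)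
        rwa [← pow_succ'] at this
    · intro x y hx hy
      rw [pd_add]
      exact Ideal.add_mem _ hx hy

lemma mem_pow_of_coeff_eq_zero : ∀ N : ℕ, ∀ f : PS K n,
    (∀ e : Fin n →₀ ℕ, dg e < N → MvPowerSeries.coeff (R := K) e f = 0) → f ∈ (mx K n) ^ N := by
  intro N
  induction N with
  | zero => intro f _; simp
  | succ N IH =>
    intro f hf
    classical
    -- the pieces
    set g : Fin n → PS K n := fun j => (fun d' : Fin n →₀ ℕ =>
      if (d' + Finsupp.single j 1).support.min = some j
      then MvPowerSeries.coeff (R := K) (d' + Finsupp.single j 1) f else 0) with hgdef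
    have hgcoeff : ∀ j d', MvPowerSeries.coeff (R := K) d' (g j) =
        (if (d' + Finsupp.single j 1).support.min = some j
         then MvPowerSeries.coeff (R := K) (d' + Finsupp.single j 1) f else 0) := fun j d' => rfl
    have hsplit : f = ∑ j, (MvPowerSeries.X j : PS K n) * g j := by
      ext d
      rw [map_sum]
      have hterm : ∀ j, MvPowerSeries.coeff (R := K) d ((MvPowerSeries.X j : PS K n) * g j)
          = if Finsupp.single j 1 ≤ d ∧ d.support.min = some j
            then MvPowerSeries.coeff (R := K) d f else 0 := by
        intro j
        rw [MvPowerSeries.X, MvPowerSeries.coeff_monomial_mul]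
        by_cases hle : Finsupp.single j 1 ≤ d
        · rw [if_pos hle, one_mul, hgcoeff, tsub_add_cancel_of_le hle]
          simp [hle]
          congr
        · rw [if_neg hle, if_neg (by tauto)]
      rw [Finset.sum_congr rfl (fun j _ => hterm j)]
      by_cases hd : d = 0
      · subst hd
        rw [hf 0 (by simp [dg])]
        simp
      · have hne : d.support.Nonempty := Finsupp.support_nonempty_iff.2 hd
        obtain ⟨j0, hj0⟩ := Finset.min_of_nonempty hne
        have hj0mem : j0 ∈ d.support := Finset.mem_of_min hj0
        have hdj0 : 1 ≤ d j0 := Nat.one_le_iff_ne_zero.2 (Finsupp.mem_support_iff.1 hj0mem)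
        rw [Finset.sum_eq_single j0]
        · rw [if_pos ⟨(single_le_iff j0 d).2 hdj0, hj0⟩]
        · intro j _ hjne
          rw [if_neg]
          rintro ⟨-, hmin⟩
          rw [hj0] at hmin
          exact hjne (Option.some_injective _ hmin.symm)
        · intro habs
          exact absurd (Finset.mem_univ j0) habs
    have hgmem : ∀ j, g j ∈ (mx K n) ^ N := by
      intro j
      refine IH (g j) ?_
      intro d' hd'
      rw [hgcoeff]
      split_ifs with hc
      · refine hf _ ?_
        rw [dg_add, dg_single]
        omega
      · rfl
    rw [hsplit]
    refine Ideal.sum_mem _ ?_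
    intro j _
    have hXj : (MvPowerSeries.X j : PS K n) ∈ mx K n := by
      rw [mem_mx_iff, MvPowerSeries.constantCoeff_X]
    have : g j * MvPowerSeries.X j ∈ (mx K n) ^ N * mx K n :=
      Ideal.mul_mem_mul (hgmem j) hXj
    rw [← pow_succ] at this
    rwa [mul_comm]

lemma pd_X (i j : Fin n) : pd i (MvPowerSeries.X j : PS K n) =
    if j = i then 1 else 0 := by
  classical
  ext e
  rcases eq_or_ne j i with rfl | hji
  · rw [if_pos rfl, coeff_pd, MvPowerSeries.coeff_X, MvPowerSeries.coeff_one]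
    by_cases he : e = 0
    · subst he; simp
    · rw [if_neg (by simpa [add_eq_right] using he), if_neg he, smul_zero]
  · rw [if_neg hji, coeff_pd, MvPowerSeries.coeff_X, map_zero]
    rw [if_neg, smul_zero]
    intro hcontra
    have := congrArg (fun d : Fin n →₀ ℕ => d i) hcontra
    simp [Finsupp.single_apply, Ne.symm hji, hji] at this

lemma pd_C (i : Fin n) (a : K) : pd i (MvPowerSeries.C (σ := Fin n) (R := K) a) = 0 := by
  classical
  ext e
  rw [coeff_pd, MvPowerSeries.coeff_C, map_zero]
  rw [if_neg, smul_zero]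
  intro hcontra
  have := congrArg (fun d : Fin n →₀ ℕ => d i) hcontra
  simp [Finsupp.single_apply] at this

lemma poly_ident (D : PS K n → PS K n)
    (Dadd : ∀ a b, D (a + b) = D a + D b)
    (Dmul : ∀ a b, D (a * b) = a * D b + b * D a)
    (DC : ∀ a : K, D (MvPowerSeries.C (σ := Fin n) (R := K) a) = 0)
    (p : MvPolynomial (Fin n) K) :
    D ↑p = ∑ j, D (MvPowerSeries.X j) * pd j (↑p : PS K n) := by
  classical
  refine MvPolynomial.induction_on (motive := fun q => D ↑q = ∑ j, D (MvPowerSeries.X j) * pd j ((q : MvPolynomial (Fin n) K) : PS K n)) p ?_ ?_ ?_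
  · intro a
    rw [MvPolynomial.coe_C, DC]
    exact (Finset.sum_eq_zero fun j _ => by rw [pd_C, mul_zero]).symm
  · intro p q hp hq
    rw [MvPolynomial.coe_add, Dadd, hp, hq, ← Finset.sum_add_distrib]
    exact Finset.sum_congr rfl fun j _ => by rw [pd_add, mul_add]
  · intro p i hp
    rw [MvPolynomial.coe_mul, MvPolynomial.coe_X, Dmul, hp]
    have hterm : ∀ j : Fin n, D (MvPowerSeries.X j) * pd j ((↑p : PS K n) * MvPowerSeries.X i)
        = (if i = j then D (MvPowerSeries.X j) * (↑p : PS K n) else 0)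
          + MvPowerSeries.X i * (D (MvPowerSeries.X j) * pd j (↑p : PS K n)) := by
      intro j
      rw [pd_mul, pd_X, mul_add]
      congr 1
      · split_ifs with h
        · rw [mul_one, mul_comm]
        · rw [mul_zero, mul_zero]
      · ring
    rw [Finset.sum_congr rfl fun j _ => hterm j, Finset.sum_add_distrib,
      Finset.sum_ite_eq, if_pos (Finset.mem_univ i), ← Finset.mul_sum]
    ring

lemma deriv_formula (D : PS K n → PS K n)
    (Dadd : ∀ a b, D (a + b) = D a + D b)
    (Dmul : ∀ a b, D (a * b) = a * D b + b * D a)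
    (DC : ∀ a : K, D (MvPowerSeries.C (σ := Fin n) (R := K) a) = 0)
    (Dcont : ∀ N : ℕ, ∀ h : PS K n, h ∈ (mx K n) ^ (N + 1) → D h ∈ (mx K n) ^ N)
    (f : PS K n) :
    D f = ∑ j, D (MvPowerSeries.X j) * pd j f := by
  classical
  have key : ∀ N : ℕ, D f - ∑ j, D (MvPowerSeries.X j) * pd j f ∈ (mx K n) ^ N := by
    intro N
    set B : Fin n →₀ ℕ := Finsupp.equivFunOnFinite.symm (fun _ => N) with hBdef
    have hBapp : ∀ j, B j = N := fun j => rfl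
    set P : MvPolynomial (Fin n) K :=
      ∑ e ∈ Finset.Iic B, MvPolynomial.monomial e (MvPowerSeries.coeff (R := K) e f) with hPdef
    have hPcoeff : ∀ e ∈ Finset.Iic B,
        MvPolynomial.coeff e P = MvPowerSeries.coeff (R := K) e f := by
      intro e he
      rw [hPdef, MvPolynomial.coeff_sum]
      rw [Finset.sum_congr rfl fun e' _ => MvPolynomial.coeff_monomial e e' _]
      rw [Finset.sum_ite_eq' (Finset.Iic B) e, if_pos he]
    set Q : PS K n := ↑P with hQdef
    have hr : f - Q ∈ (mx K n) ^ (N + 1) := by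
      apply mem_pow_of_coeff_eq_zero
      intro e he
      have heB : e ∈ Finset.Iic B := by
        rw [Finset.mem_Iic]
        intro j
        have h1 : e j ≤ dg e := Finset.single_le_sum (f := fun k => e k)
          (fun _ _ => Nat.zero_le _) (Finset.mem_univ j)
        rw [hBapp]
        omega
      rw [map_sub, hQdef, MvPolynomial.coeff_coe, hPcoeff e heB, sub_self]
    have h1 : D f = D Q + D (f - Q) := by
      rw [← Dadd]; congr 1; ring
    have h2 : ∀ j, pd j f = pd j Q + pd j (f - Q) := by
      intro j; rw [← pd_add]; congr 1; ring
    have h3 : ∑ j, D (MvPowerSeries.X j) * pd j f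
        = (∑ j, D (MvPowerSeries.X j) * pd j Q)
          + ∑ j, D (MvPowerSeries.X j) * pd j (f - Q) := by
      rw [← Finset.sum_add_distrib]
      exact Finset.sum_congr rfl fun j _ => by rw [h2 j, mul_add]
    have hQident : D Q = ∑ j, D (MvPowerSeries.X j) * pd j Q := by
      rw [hQdef]; exact poly_ident D Dadd Dmul DC P
    have h4 : D f - ∑ j, D (MvPowerSeries.X j) * pd j f
        = D (f - Q) - ∑ j, D (MvPowerSeries.X j) * pd j (f - Q) := by
      rw [h1, h3, hQident]
      ring
    rw [h4]
    refine Submodule.sub_mem _ (Dcont N _ hr) (Ideal.sum_mem _ fun j _ => ?_)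
    exact Ideal.mul_mem_left _ _ (pd_mem_pow j N _ hr)
  have := eq_zero_of_forall_mem_pow key
  rw [sub_eq_zero] at this; exact this

lemma mem_mx_iff_not_isUnit (f : PS K n) : f ∈ mx K n ↔ ¬ IsUnit f := by
  rw [mem_mx_iff, MvPowerSeries.isUnit_iff_constantCoeff, isUnit_iff_ne_zero, not_not]

lemma apply_mem_mx (ψ : PS K n ≃ₐ[K] PS K n) {a : PS K n} (ha : a ∈ mx K n) :
    ψ a ∈ mx K n := by
  rw [mem_mx_iff_not_isUnit] at ha ⊢
  intro hu
  exact ha (by simpa using hu.map ψ.symm.toAlgHom)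

lemma map_mx (ψ : PS K n ≃ₐ[K] PS K n) :
    Ideal.map (ψ : PS K n →+* PS K n) (mx K n) = mx K n := by
  refine le_antisymm (Ideal.map_le_iff_le_comap.2 fun a ha => ?_) (fun a ha => ?_)
  · exact apply_mem_mx ψ ha
  · have h1 : ψ.symm a ∈ mx K n := apply_mem_mx ψ.symm ha
    have h2 := Ideal.mem_map_of_mem (ψ : PS K n →+* PS K n) h1
    simpa using h2

lemma apply_mem_pow (ψ : PS K n ≃ₐ[K] PS K n) {N : ℕ} {a : PS K n}
    (ha : a ∈ (mx K n) ^ N) : ψ a ∈ (mx K n) ^ N := by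
  have h := Ideal.mem_map_of_mem (ψ : PS K n →+* PS K n) ha
  rwa [Ideal.map_pow, map_mx] at h

lemma pd_apply_mem (ψ : PS K n ≃ₐ[K] PS K n) (i : Fin n) (h : PS K n) :
    pd i (ψ h) ∈ Ideal.map (ψ : PS K n →+* PS K n) (jId h) := by
  classical
  set D : PS K n → PS K n := fun x => ψ.symm (pd i (ψ x)) with hD
  have Dadd : ∀ a b, D (a + b) = D a + D b := by
    intro a b; simp [hD, pd_add]
  have Dmul : ∀ a b, D (a * b) = a * D b + b * D a := by
    intro a b
    simp only [hD, map_mul, pd_mul, map_add]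
    simp
  have DC : ∀ a : K, D (MvPowerSeries.C (σ := Fin n) (R := K) a) = 0 := by
    intro a
    have hCa : (MvPowerSeries.C (σ := Fin n) (R := K) a : PS K n) = algebraMap K (PS K n) a := by
      rw [MvPowerSeries.algebraMap_apply]; simp
    rw [hD]
    simp only [hCa, AlgEquiv.commutes]
    rw [← hCa, pd_C, map_zero]
  have Dcont : ∀ N : ℕ, ∀ h : PS K n, h ∈ (mx K n) ^ (N + 1) → D h ∈ (mx K n) ^ N := by
    intro N h hh
    exact apply_mem_pow ψ.symm (pd_mem_pow i N _ (apply_mem_pow ψ hh))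
  have hform := deriv_formula D Dadd Dmul DC Dcont h
  have : pd i (ψ h) = ψ (D h) := by rw [hD]; simp
  rw [this, hform, map_sum]
  refine Ideal.sum_mem _ fun j _ => ?_
  rw [map_mul]
  refine Ideal.mul_mem_left _ _ ?_
  exact Ideal.mem_map_of_mem _ (Ideal.subset_span ⟨j, rfl⟩)

lemma jId_le_map (ψ : PS K n ≃ₐ[K] PS K n) (h : PS K n) :
    jId (ψ h) ≤ Ideal.map (ψ : PS K n →+* PS K n) (jId h) := by
  rw [jId, Ideal.span_le]
  rintro - ⟨i, rfl⟩
  exact pd_apply_mem ψ i h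

lemma map_map_symm (ψ : PS K n ≃ₐ[K] PS K n) (J : Ideal (PS K n)) :
    Ideal.map (ψ : PS K n →+* PS K n)
      (Ideal.map (ψ.symm : PS K n →+* PS K n) J) = J := by
  refine le_antisymm (Ideal.map_le_iff_le_comap.2 (Ideal.map_le_iff_le_comap.2
    fun a ha => ?_)) (fun a ha => ?_)
  · simpa using ha
  · have h1 := Ideal.mem_map_of_mem (ψ.symm : PS K n →+* PS K n) ha
    have h2 := Ideal.mem_map_of_mem (ψ : PS K n →+* PS K n) h1
    simpa using h2

lemma map_jId (ψ : PS K n ≃ₐ[K] PS K n) (f : PS K n) :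
    Ideal.map (ψ : PS K n →+* PS K n) (jId f) = jId (ψ f) := by
  refine le_antisymm ?_ (jId_le_map ψ f)
  have h1 : jId f ≤ Ideal.map (ψ.symm : PS K n →+* PS K n) (jId (ψ f)) := by
    have := jId_le_map ψ.symm (ψ f)
    simpa using this
  calc Ideal.map (ψ : PS K n →+* PS K n) (jId f)
      ≤ Ideal.map (ψ : PS K n →+* PS K n)
        (Ideal.map (ψ.symm : PS K n →+* PS K n) (jId (ψ f))) := Ideal.map_mono h1
    _ = jId (ψ f) := map_map_symm ψ _

lemma map_MkId (ψ : PS K n ≃ₐ[K] PS K n) (k : ℕ) (f : PS K n) :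
    Ideal.map (ψ : PS K n →+* PS K n) (MkId k f) = MkId k (ψ f) := by
  rw [MkId, Ideal.map_mul, Ideal.map_pow, map_mx, map_jId, MkId]

theorem stmt_2' {K : Type*} [Field K] {n : ℕ} (f g : PS K n)
    (h : ∃ φ : PS K n ≃ₐ[K] PS K n, g = φ f) :
    ∀ k : ℕ, ∃ e : (PS K n ⧸ MkId k f) ≃ₐ[K] (PS K n ⧸ MkId k g),
      e (Ideal.Quotient.mk (MkId k f) f) = Ideal.Quotient.mk (MkId k g) g := by
  obtain ⟨φ, rfl⟩ := h
  intro k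
  refine ⟨Ideal.quotientEquivAlg (MkId k f) (MkId k (φ f)) φ (map_MkId φ k f).symm, ?_⟩
  simp [Ideal.quotientEquivAlg, Ideal.quotientEquiv_mk]
  rfl

end Aux

/-- right equivalent power series have, for every `k`, isomorphic
`k`-th Milnor algebras as `K[[t]]`-algebras, i.e. there is a `K`-algebra
isomorphism sending the class of `f` to the class of `g`. -/
theorem stmt_2 {K : Type*} [Field K] {n : ℕ} (f g : PS K n)
    (hf : f ∈ mx K n) (hg : g ∈ mx K n)
    (h : RightEquiv f g) :
    ∀ k : ℕ, ∃ e : (PS K n ⧸ MkId k f) ≃ₐ[K] (PS K n ⧸ MkId k g),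
      e (Ideal.Quotient.mk (MkId k f) f) = Ideal.Quotient.mk (MkId k g) g := by
  exact stmt_2' f g h
end
end

section
/- Let f, g ∈ K[[x_1,...,x_n]] with ord(f) = s ≥ 2, μ(f) < ∞, and s' = ord(j(f)). If M_k(f) ≅ M_k(g) as K[[t]]-algebras for some k with m^{⌊(k+s+s'+1)/2⌋} ⊆ m^2 j(f), then f is right equivalent to g. (Assuming the lifting lemma and the BGM right-determinacy theorem: if m^{l+2} ⊆ m^2 j(f) then f is right (2l − ord(f) + 2)-determined.) -/
noncomputable section

namespace Stmt10Aux

open MvPowerSeries Finsupp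

variable {K : Type*} [Field K] {n : ℕ}

lemma mem_mx_iff {f : PS K n} : f ∈ mx K n ↔ constantCoeff (σ := Fin n) (R := K) f = 0 := Iff.rfl

lemma X_mem_mx (i : Fin n) : (X i : PS K n) ∈ mx K n := by
  simp [mem_mx_iff]

lemma coeff_pd (i : Fin n) (f : PS K n) (e : Fin n →₀ ℕ) :
    MvPowerSeries.coeff (R := K) e (pd i f) =
      (e i + 1 : ℕ) • MvPowerSeries.coeff (R := K) (e + Finsupp.single i 1) f := rfl

lemma pd_add (i : Fin n) (a b : PS K n) : pd i (a + b) = pd i a + pd i b := by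
  apply MvPowerSeries.ext; intro e
  simp [coeff_pd, smul_add]

lemma pd_zero (i : Fin n) : pd i (0 : PS K n) = 0 := by
  apply MvPowerSeries.ext; intro e
  simp [coeff_pd]

end Stmt10Aux

namespace Stmt10Aux
open MvPowerSeries Finsupp
variable {K : Type*} [Field K] {n : ℕ}

lemma pd_X_mul (i j : Fin n) (h : PS K n) :
    pd i ((X j : PS K n) * h) = (if i = j then h else 0) + X j * pd i h := by
  classical
  apply MvPowerSeries.ext; intro e
  rw [map_add, coeff_pd, X_def, coeff_monomial_mul, coeff_monomial_mul,
    apply_ite (MvPowerSeries.coeff (R := K) e), map_zero]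
  by_cases hij : i = j
  · subst hij
    have h1 : Finsupp.single i 1 ≤ e + Finsupp.single i 1 := by
      rw [Finsupp.single_le_iff]; simp
    have h2 : e + Finsupp.single i 1 - Finsupp.single i 1 = e := by simp
    rw [if_pos h1, if_pos rfl, h2]
    by_cases h3 : Finsupp.single i 1 ≤ e
    · have h3' : 1 ≤ e i := Finsupp.single_le_iff.mp h3
      have h4 : (e - Finsupp.single i 1 : Fin n →₀ ℕ) i + 1 = e i := by
        rw [Finsupp.tsub_apply, Finsupp.single_apply, if_pos rfl]; omega
      have h5 : e - Finsupp.single i 1 + Finsupp.single i 1 = e := by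
        ext a
        rw [Finsupp.add_apply, Finsupp.tsub_apply, Finsupp.single_apply]
        by_cases ha : i = a
        · subst ha; simp; omega
        · simp [ha]
      rw [if_pos h3, coeff_pd, h4, h5, one_mul, nsmul_eq_mul, nsmul_eq_mul]
      push_cast
      ring
    · have h3' : e i = 0 := by
        by_contra hc
        exact h3 (Finsupp.single_le_iff.mpr (by omega))
      rw [if_neg h3, h3', one_mul]
      simp
  · have h1 : Finsupp.single j 1 ≤ e + Finsupp.single i 1 ↔ Finsupp.single j 1 ≤ e := by
      rw [Finsupp.single_le_iff, Finsupp.single_le_iff, Finsupp.add_apply,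
        Finsupp.single_apply, if_neg hij, add_zero]
    rw [if_neg hij, zero_add]
    by_cases h2 : Finsupp.single j 1 ≤ e
    · have h2' : 1 ≤ e j := Finsupp.single_le_iff.mp h2
      rw [if_pos (h1.mpr h2), if_pos h2, coeff_pd]
      have h4 : (e - Finsupp.single j 1 : Fin n →₀ ℕ) i + 1 = e i + 1 := by
        rw [Finsupp.tsub_apply, Finsupp.single_apply, if_neg (fun hc => hij hc.symm)]; omega
      have h5 : e - Finsupp.single j 1 + Finsupp.single i 1
          = e + Finsupp.single i 1 - Finsupp.single j 1 := by
        ext a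
        rw [Finsupp.add_apply, Finsupp.tsub_apply, Finsupp.tsub_apply, Finsupp.add_apply,
          Finsupp.single_apply, Finsupp.single_apply]
        by_cases haj : j = a
        · subst haj
          rw [if_neg hij, if_pos rfl]; omega
        · rw [if_neg haj]; omega
      rw [h4, h5]; ring
    · rw [if_neg (fun hc => h2 (h1.mp hc)), if_neg h2, smul_zero]

end Stmt10Aux

namespace Stmt10Aux
open MvPowerSeries Finsupp
variable {K : Type*} [Field K] {n : ℕ}

lemma mx_le_span : mx K n ≤ Ideal.span (Set.range (X : Fin n → PS K n)) := by
  classical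
  intro g hg
  have hg0 : (MvPowerSeries.coeff (R := K) 0) g = 0 := hg
  set gi : Fin n → PS K n := fun i e =>
    if ∀ j : Fin n, j < i → e j = 0 then
      MvPowerSeries.coeff (R := K) (e + Finsupp.single i 1) g else 0 with hgi
  have hcoeff : ∀ (i : Fin n) (e : Fin n →₀ ℕ),
      MvPowerSeries.coeff (R := K) e ((X i : PS K n) * gi i) =
        if 1 ≤ e i ∧ ∀ j : Fin n, j < i → e j = 0 then MvPowerSeries.coeff (R := K) e g else 0 := by
    intro i e
    rw [X_def, coeff_monomial_mul, one_mul]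
    by_cases h1 : Finsupp.single i 1 ≤ e
    · have h1' : 1 ≤ e i := Finsupp.single_le_iff.mp h1
      rw [if_pos h1]
      have hsub : ∀ j : Fin n, j ≠ i → (e - Finsupp.single i 1 : Fin n →₀ ℕ) j = e j := by
        intro j hj
        rw [Finsupp.tsub_apply, Finsupp.single_apply, if_neg (fun hc => hj hc.symm)]; omega
      have hback : e - Finsupp.single i 1 + Finsupp.single i 1 = e := by
        ext a
        rw [Finsupp.add_apply, Finsupp.tsub_apply, Finsupp.single_apply]
        by_cases ha : i = a
        · subst ha; simp; omega
        · simp [ha]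
      have : MvPowerSeries.coeff (R := K) (e - Finsupp.single i 1) (gi i)
          = if ∀ j : Fin n, j < i → e j = 0 then MvPowerSeries.coeff (R := K) e g else 0 := by
        rw [hgi]
        show (if ∀ j : Fin n, j < i → (e - Finsupp.single i 1 : Fin n →₀ ℕ) j = 0 then
          MvPowerSeries.coeff (R := K) ((e - Finsupp.single i 1) + Finsupp.single i 1) g else 0) = _
        rw [hback]
        congr 1
        apply propext
        constructor
        · intro hall j hj
          have := hall j hj
          rwa [hsub j (ne_of_lt hj)] at this
        · intro hall j hj
          rw [hsub j (ne_of_lt hj)]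
          exact hall j hj
      rw [this]
      by_cases h2 : ∀ j : Fin n, j < i → e j = 0
      · rw [if_pos h2, if_pos ⟨h1', h2⟩]
      · rw [if_neg h2, if_neg (fun hc => h2 hc.2)]
    · have h1' : ¬ (1 ≤ e i) := fun hc => h1 (Finsupp.single_le_iff.mpr hc)
      rw [if_neg h1, if_neg (fun hc => h1' hc.1)]
  have hdecomp : g = ∑ i : Fin n, (X i : PS K n) * gi i := by
    apply MvPowerSeries.ext; intro e
    rw [map_sum]
    simp only [hcoeff]
    by_cases he : e = 0
    · subst he
      rw [Finset.sum_eq_zero, hg0]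
      intro i _
      rw [if_neg]
      rintro ⟨h1, -⟩
      simp at h1
    · have hex : ∃ i : Fin n, e i ≠ 0 := by
        by_contra hc
        push_neg at hc
        exact he (Finsupp.ext fun a => hc a)
      have hne : e.support.Nonempty := by
        obtain ⟨i, hi⟩ := hex
        exact ⟨i, Finsupp.mem_support_iff.mpr hi⟩
      set i0 := e.support.min' hne with hi0
      have hi0mem : e i0 ≠ 0 := Finsupp.mem_support_iff.mp (e.support.min'_mem hne)
      have hi0min : ∀ j : Fin n, j < i0 → e j = 0 := by
        intro j hj
        by_contra hc
        exact absurd (e.support.min'_le j (Finsupp.mem_support_iff.mpr hc)) (not_le.mpr hj)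
      rw [Finset.sum_eq_single i0]
      · rw [if_pos ⟨by omega, hi0min⟩]
      · intro i _ hi
        rw [if_neg]
        rintro ⟨h1, h2⟩
        rcases lt_or_gt_of_ne hi with hlt | hgt
        · have := hi0min i hlt; omega
        · exact hi0mem (h2 i0 hgt)
      · intro hc
        exact absurd (Finset.mem_univ i0) hc
  rw [hdecomp]
  apply Ideal.sum_mem
  intro i _
  exact Ideal.mul_mem_right _ _ (Ideal.subset_span ⟨i, rfl⟩)

end Stmt10Aux

namespace Stmt10Aux
open MvPowerSeries Finsupp
variable {K : Type*} [Field K] {n : ℕ}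

lemma pd_mem_pow (i : Fin n) : ∀ (d : ℕ) (f : PS K n),
    f ∈ (mx K n) ^ d → pd i f ∈ (mx K n) ^ (d - 1) := by
  intro d
  induction d with
  | zero => intro f _; simp [Ideal.one_eq_top]
  | succ d ih =>
    intro f hf
    simp only [Nat.add_sub_cancel]
    have hf' : f ∈ Ideal.span (Set.range (X : Fin n → PS K n)) * (mx K n) ^ d := by
      have : (mx K n) ^ (d + 1) ≤ Ideal.span (Set.range (X : Fin n → PS K n)) * (mx K n) ^ d := by
        rw [pow_succ']
        exact Ideal.mul_mono mx_le_span le_rfl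
      exact this hf
    have key : ∀ a ∈ Ideal.span (Set.range (X : Fin n → PS K n)),
        ∀ b ∈ (mx K n) ^ d, pd i (a * b) ∈ (mx K n) ^ d := by
      intro a ha
      induction ha using Submodule.span_induction with
      | mem x hx =>
        obtain ⟨j, rfl⟩ := hx
        intro b hb
        rw [pd_X_mul]
        apply Ideal.add_mem
        · by_cases hij : i = j
          · rw [if_pos hij]; exact hb
          · rw [if_neg hij]; exact Ideal.zero_mem _
        · have h1 : pd i b ∈ (mx K n) ^ (d - 1) := ih b hb
          have h2 : (X j : PS K n) * pd i b ∈ mx K n * (mx K n) ^ (d - 1) :=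
            Ideal.mul_mem_mul (X_mem_mx j) h1
          have h3 : mx K n * (mx K n) ^ (d - 1) = (mx K n) ^ (1 + (d - 1)) := by
            rw [pow_add, pow_one]
          rw [h3] at h2
          exact Ideal.pow_le_pow_right (by omega) h2
      | zero =>
        intro b hb
        rw [zero_mul, pd_zero]; exact Ideal.zero_mem _
      | add x y hx hy hx' hy' =>
        intro b hb
        rw [add_mul, pd_add]; exact Ideal.add_mem _ (hx' b hb) (hy' b hb)
      | smul c x hx hx' =>
        intro b hb
        have heq : (c • x) * b = x * (c * b) := by
          rw [smul_eq_mul]; ring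
        rw [heq]
        exact hx' (c * b) (Ideal.mul_mem_left _ _ hb)
    refine Submodule.mul_induction_on hf' (fun a ha b hb => key a ha b hb) ?_
    · intro x y hx hy
      rw [pd_add]; exact Ideal.add_mem _ hx hy

end Stmt10Aux

namespace Stmt10Aux
open MvPowerSeries Finsupp
variable {K : Type*} [Field K] {n : ℕ}

/-- degree of an exponent -/
def deg (e : Fin n →₀ ℕ) : ℕ := e.sum fun _ v => v

lemma deg_add (u v : Fin n →₀ ℕ) : deg (u + v) = deg u + deg v :=
  Finsupp.sum_add_index' (fun _ => rfl) (fun _ _ _ => rfl)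

lemma deg_eq_zero_iff (e : Fin n →₀ ℕ) : deg e = 0 ↔ e = 0 := by
  constructor
  · intro h
    ext a
    by_contra hc
    have ha : a ∈ e.support := Finsupp.mem_support_iff.mpr (by simpa using hc)
    have : e a ≤ deg e := by
      unfold deg Finsupp.sum
      exact Finset.single_le_sum (fun i _ => Nat.zero_le _) ha
    simp at hc
    omega
  · rintro rfl; simp [deg]

lemma coeff_eq_zero_of_mem_pow : ∀ (d : ℕ) (f : PS K n), f ∈ (mx K n) ^ d →
    ∀ e : Fin n →₀ ℕ, deg e < d → MvPowerSeries.coeff (R := K) e f = 0 := by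
  intro d
  induction d with
  | zero => intro f _ e he; omega
  | succ d ih =>
    intro f hf e he
    rw [pow_succ] at hf
    refine Submodule.mul_induction_on (C := fun x => ∀ e : Fin n →₀ ℕ, deg e < d + 1 →
      MvPowerSeries.coeff (R := K) e x = 0) hf ?_ ?_ e he
    · intro a ha b hb e' he'
      classical
      rw [MvPowerSeries.coeff_mul]
      apply Finset.sum_eq_zero
      rintro ⟨u, v⟩ hp
      have huv : u + v = e' := Finset.HasAntidiagonal.mem_antidiagonal.mp hp
      by_cases hv : v = 0
      · subst hv
        have : MvPowerSeries.coeff (R := K) 0 b = 0 := hb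
        simp [this]
      · have hvdeg : 1 ≤ deg v := by
          rcases Nat.eq_zero_or_pos (deg v) with h0 | h1
          · exact absurd ((deg_eq_zero_iff v).mp h0) hv
          · exact h1
        have hudeg : deg u < d := by
          have := deg_add u v
          rw [huv] at this
          omega
        rw [ih a ha u hudeg, zero_mul]
    · intro x y hx hy e' he'
      rw [map_add, hx e' he', hy e' he', add_zero]

lemma pow_le_pow_ord (hn : 0 < n) {a b : ℕ} (h : (mx K n) ^ a ≤ (mx K n) ^ b) : b ≤ a := by
  by_contra hc
  push_neg at hc
  set i0 : Fin n := ⟨0, hn⟩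
  have hx : (X i0 : PS K n) ^ a ∈ (mx K n) ^ a := Ideal.pow_mem_pow (X_mem_mx i0) a
  have hx' := h hx
  have hdeg : deg (Finsupp.single i0 a) = a := by
    simp [deg, Finsupp.sum_single_index]
  have := coeff_eq_zero_of_mem_pow b _ hx' (Finsupp.single i0 a) (by omega)
  rw [X_pow_eq, MvPowerSeries.coeff_monomial_same] at this
  exact one_ne_zero this

lemma theta_mem_mx (θ : PS K n ≃ₐ[K] PS K n) {x : PS K n} (hx : x ∈ mx K n) :
    θ x ∈ mx K n := by
  rw [mem_mx_iff] at hx ⊢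
  by_contra hne
  have hu : IsUnit (θ x) := isUnit_iff_constantCoeff.mpr (isUnit_iff_ne_zero.mpr hne)
  have hux : IsUnit x := by
    have := hu.map (θ.symm : PS K n →ₐ[K] PS K n)
    simpa using this
  have := hux.map (MvPowerSeries.constantCoeff (σ := Fin n) (R := K))
  rw [hx] at this
  exact not_isUnit_zero this

lemma map_mx (θ : PS K n ≃ₐ[K] PS K n) : Ideal.map θ (mx K n) = mx K n := by
  apply le_antisymm
  · rw [Ideal.map_le_iff_le_comap]
    intro x hx
    exact theta_mem_mx θ hx
  · intro x hx
    have : x = θ (θ.symm x) := (θ.apply_symm_apply x).symm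
    rw [this]
    exact Ideal.mem_map_of_mem _ (theta_mem_mx θ.symm hx)

lemma theta_mem_mx_pow (θ : PS K n ≃ₐ[K] PS K n) (c : ℕ) {x : PS K n}
    (hx : x ∈ (mx K n) ^ c) : θ x ∈ (mx K n) ^ c := by
  have h1 : θ x ∈ Ideal.map θ ((mx K n) ^ c) := Ideal.mem_map_of_mem _ hx
  rwa [Ideal.map_pow, map_mx] at h1

end Stmt10Aux

/-- if `M_k(f) ≅ M_k(g)` as `K[[t]]`-algebras for some `k` with
`m^{⌊(k+s+s'+1)/2⌋} ⊆ m^2 j(f)`, then `f` and `g` are right equivalent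
(assuming the lifting lemma and the BGM right determinacy theorem). -/
theorem stmt_10 {K : Type*} [Field K] [IsAlgClosed K] {n : ℕ} (f g : PS K n)
    (s s' k : ℕ) (hs : 2 ≤ s)
    (hf : f ∈ (mx K n) ^ s) (hf' : f ∉ (mx K n) ^ (s + 1))
    (hs' : jId f ≤ (mx K n) ^ s') (hs'' : ¬ jId f ≤ (mx K n) ^ (s' + 1))
    (hmu : FiniteDimensional K (PS K n ⧸ jId f))
    (hlift : ∀ I J : Ideal (PS K n), I ≤ mx K n → J ≤ mx K n →
      ∀ e : (PS K n ⧸ I) ≃ₐ[K] (PS K n ⧸ J),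
        ∃ θ : PS K n ≃ₐ[K] PS K n, Ideal.map θ I = J ∧
          ∀ h : PS K n, Ideal.Quotient.mk J (θ h) = e (Ideal.Quotient.mk I h))
    (hBGM : ∀ l : ℕ, (mx K n) ^ (l + 2) ≤ (mx K n) ^ 2 * jId f →
      RightDetermined (2 * l - s + 2) f)
    (hsub : (mx K n) ^ ((k + s + s' + 1) / 2) ≤ (mx K n) ^ 2 * jId f)
    (hiso : ∃ e : (PS K n ⧸ MkId k f) ≃ₐ[K] (PS K n ⧸ MkId k g),
      e (Ideal.Quotient.mk (MkId k f) f) = Ideal.Quotient.mk (MkId k g) g) :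
    RightEquiv f g := by
  classical
  obtain ⟨e, he⟩ := hiso
  have hn : 0 < n := by
    rcases Nat.eq_zero_or_pos n with h0 | h
    · exfalso
      subst h0
      have hfm : f ∈ mx K 0 := Ideal.pow_le_self (by omega) hf
      have hf0 : f = 0 := by
        apply MvPowerSeries.ext; intro e'
        have he' : e' = 0 := Finsupp.ext fun a => a.elim0
        rw [he', map_zero]
        rw [MvPowerSeries.coeff_zero_eq_constantCoeff_apply]
        exact hfm
      exact hf' (hf0 ▸ Submodule.zero_mem _)
    · exact h
  have hjf : jId f ≤ (mx K n) ^ (s - 1) := by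
    rw [jId, Ideal.span_le]
    rintro x ⟨i, rfl⟩
    exact Stmt10Aux.pd_mem_pow i s f hf
  have hss' : s - 1 ≤ s' := by
    by_contra hc
    push_neg at hc
    exact hs'' (le_trans hjf (Ideal.pow_le_pow_right (by omega)))
  have hq2 : s' + 2 ≤ (k + s + s' + 1) / 2 := by
    have hle : (mx K n) ^ ((k + s + s' + 1) / 2) ≤ (mx K n) ^ (s' + 2) := by
      refine le_trans hsub (le_trans (Ideal.mul_mono le_rfl hs') ?_)
      rw [← pow_add]
      exact Ideal.pow_le_pow_right (by omega)
    exact Stmt10Aux.pow_le_pow_ord hn hle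
  have hk2 : 2 ≤ k := by omega
  have hI : MkId k f ≤ mx K n :=
    le_trans Ideal.mul_le_left (Ideal.pow_le_self (by omega))
  have hJ : MkId k g ≤ mx K n :=
    le_trans Ideal.mul_le_left (Ideal.pow_le_self (by omega))
  obtain ⟨θ, hmapθ, hcomm⟩ := hlift _ _ hI hJ e
  have hgf : g - θ f ∈ MkId k g := by
    have h1 : Ideal.Quotient.mk (MkId k g) (θ f) = Ideal.Quotient.mk (MkId k g) g := by
      rw [hcomm f, he]
    exact Ideal.Quotient.eq.mp h1.symm
  have hJle : MkId k g ≤ (mx K n) ^ (k + s') := by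
    rw [← hmapθ]
    show Ideal.map θ ((mx K n) ^ k * jId f) ≤ _
    rw [Ideal.map_mul, Ideal.map_pow, Stmt10Aux.map_mx]
    have h2 : Ideal.map θ (jId f) ≤ (mx K n) ^ s' := by
      refine le_trans (Ideal.map_mono hs') ?_
      rw [Ideal.map_pow, Stmt10Aux.map_mx]
    calc (mx K n) ^ k * Ideal.map θ (jId f)
        ≤ (mx K n) ^ k * (mx K n) ^ s' := Ideal.mul_mono le_rfl h2
      _ = (mx K n) ^ (k + s') := (pow_add _ _ _).symm
  set l := (k + s + s' + 1) / 2 - 2 with hl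
  have hdet : RightDetermined (2 * l - s + 2) f := by
    apply hBGM
    have hl2 : l + 2 = (k + s + s' + 1) / 2 := by omega
    rw [hl2]; exact hsub
  have harith : 2 * l - s + 2 + 1 ≤ k + s' := by omega
  have hmem : θ.symm g - f ∈ (mx K n) ^ (2 * l - s + 2 + 1) := by
    have h1 : g - θ f ∈ (mx K n) ^ (2 * l - s + 2 + 1) :=
      Ideal.pow_le_pow_right harith (hJle hgf)
    have h2 := Stmt10Aux.theta_mem_mx_pow θ.symm _ h1
    simpa [map_sub] using h2
  obtain ⟨ψ, hψ⟩ := hdet (θ.symm g) hmem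
  refine ⟨ψ.trans θ, ?_⟩
  have h3 : θ (θ.symm g) = θ (ψ f) := congrArg θ hψ
  simpa using h3
end
end
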